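/- Let n ≥ 3 be an integer, let 1 ≤ i < n/2, and let η = e^{2πi/n}. Then there is a (unique) polynomial g ∈ ℂ[X] satisfying (X−1)(X−η^{i})(X−η^{−i})·g(X) = ((1−η^{i})(1−η^{−i})/n)·X(X+1)(X^{n}−1); moreover g has real coefficients, g has degree n−1, 0 is a simple root of g (i.e. X divides g but X² does not), and g(1) = 2. -/

import Mathlib

open Polynomial

/-- For `n ≥ 3`, `1 ≤ i < n/2`, `η = e^{2πi/n}`, there is a unique polynomial `g ∈ ℂ[X]` with
`(X−1)(X−ηⁱ)(X−η⁻ⁱ)·g = ((1−ηⁱ)(1−η⁻ⁱ)/n)·X(X+1)(Xⁿ−1)`; moreover `g` has real coefficients,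
degree `n−1`, `0` is a simple root of `g`, and `g(1) = 2`. -/
theorem genericDegree_phi2i (n : ℕ) (hn : 3 ≤ n) (i : ℕ) (hi1 : 1 ≤ i) (hi2 : 2 * i < n)
    (η : ℂ) (hη : η = Complex.exp (2 * Real.pi * Complex.I / (n : ℂ))) :
    (∃! g : ℂ[X],
      (X - 1) * (X - C (η ^ i)) * (X - C ((η ^ i)⁻¹)) * g =
        C ((1 - η ^ i) * (1 - (η ^ i)⁻¹) / (n : ℂ)) * (X * (X + 1) * (X ^ n - 1))) ∧
    ∀ g : ℂ[X],
      (X - 1) * (X - C (η ^ i)) * (X - C ((η ^ i)⁻¹)) * g =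
        C ((1 - η ^ i) * (1 - (η ^ i)⁻¹) / (n : ℂ)) * (X * (X + 1) * (X ^ n - 1)) →
      (∀ k, (g.coeff k).im = 0) ∧ g.natDegree = n - 1 ∧
        ((X : ℂ[X]) ∣ g ∧ ¬ (X : ℂ[X]) ^ 2 ∣ g) ∧ g.eval 1 = 2 := by
  have hn0 : (n : ℂ) ≠ 0 := Nat.cast_ne_zero.mpr (by omega)
  have hprim : IsPrimitiveRoot η n := by
    rw [hη]; exact Complex.isPrimitiveRoot_exp n (by omega)
  set ζ : ℂ := η ^ i with hζdef
  have hηn : η ^ n = 1 := hprim.pow_eq_one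
  have hζn : ζ ^ n = 1 := by
    rw [hζdef, ← pow_mul, mul_comm, pow_mul, hηn, one_pow]
  have hζ0 : ζ ≠ 0 := by
    intro h; rw [h] at hζn; simp [zero_pow (show n ≠ 0 by omega)] at hζn
  have hζ1 : ζ ≠ 1 := hprim.pow_ne_one_of_pos_of_lt (by omega) (by omega)
  have hζ2 : η ^ (i * 2) ≠ 1 := hprim.pow_ne_one_of_pos_of_lt (by omega) (by omega)
  have hζinv1 : ζ⁻¹ ≠ 1 := by
    intro h; exact hζ1 (by rw [← inv_inv ζ, h, inv_one])
  have hζne : ζ ≠ ζ⁻¹ := by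
    intro h
    apply hζ2
    have : ζ * ζ = ζ * ζ⁻¹ := by rw [← h]
    rw [mul_inv_cancel₀ hζ0] at this
    rw [pow_mul]; rw [← hζdef, pow_two]; exact this
  have hζninv : (ζ⁻¹) ^ n = 1 := by rw [inv_pow, hζn, inv_one]
  -- the constant is nonzero
  set c : ℂ := (1 - ζ) * (1 - ζ⁻¹) / (n : ℂ) with hcdef
  have hc1 : (1 : ℂ) - ζ ≠ 0 := sub_ne_zero.mpr (Ne.symm hζ1)
  have hc2 : (1 : ℂ) - ζ⁻¹ ≠ 0 := sub_ne_zero.mpr (Ne.symm hζinv1)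
  have hc : c ≠ 0 := div_ne_zero (mul_ne_zero hc1 hc2) hn0
  -- the cubic factor
  set P : ℂ[X] := (X - 1) * (X - C ζ) * (X - C (ζ⁻¹)) with hPdef
  have hPmonic : P.Monic := by
    have h1 : ((X : ℂ[X]) - 1).Monic := by
      have := monic_X_sub_C (1 : ℂ); simpa using this
    exact (h1.mul (monic_X_sub_C ζ)).mul (monic_X_sub_C ζ⁻¹)
  have hP0 : P ≠ 0 := hPmonic.ne_zero
  -- divisibility of P into X^n - 1
  have hdvd : P ∣ (X : ℂ[X]) ^ n - 1 := by
    have hmem : ∀ x : ℂ, x ^ n = 1 → x ∈ nthRootsFinset n (1 : ℂ) := fun x hx =>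
      (mem_nthRootsFinset (by omega : 0 < n) (1 : ℂ)).mpr hx
    have hsub : ({1, ζ, ζ⁻¹} : Finset ℂ) ⊆ nthRootsFinset n (1 : ℂ) := by
      intro x hx
      simp only [Finset.mem_insert, Finset.mem_singleton] at hx
      rcases hx with h | h | h
      · exact hmem x (by rw [h, one_pow])
      · exact hmem x (by rw [h]; exact hζn)
      · exact hmem x (by rw [h]; exact hζninv)
    have hd := Finset.prod_dvd_prod_of_subset _ _ (fun x => (X : ℂ[X]) - C x) hsub
    rw [← X_pow_sub_one_eq_prod (by omega : 0 < n) hprim] at hd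
    have hprod : ∏ x ∈ ({1, ζ, ζ⁻¹} : Finset ℂ), ((X : ℂ[X]) - C x) = P := by
      rw [Finset.prod_insert (by simp [Ne.symm hζ1, Ne.symm hζinv1]),
        Finset.prod_insert (by simp [hζne]), Finset.prod_singleton]
      rw [hPdef]
      simp only [map_one]
      ring
    rwa [hprod] at hd
  obtain ⟨d, hd⟩ := hdvd
  -- conjugation facts
  have hconjη : (starRingEnd ℂ) η = η⁻¹ := by
    rw [hη, ← Complex.exp_conj, ← Complex.exp_neg]
    congr 1
    simp only [map_div₀, map_mul, Complex.conj_I, Complex.conj_ofReal, map_ofNat,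
      Complex.conj_natCast]
    ring
  have hconjζ : (starRingEnd ℂ) ζ = ζ⁻¹ := by rw [hζdef, map_pow, hconjη, inv_pow]
  have hconjζinv : (starRingEnd ℂ) ζ⁻¹ = ζ := by
    rw [map_inv₀, hconjζ, inv_inv]
  have hconjc : (starRingEnd ℂ) c = c := by
    rw [hcdef, map_div₀, map_mul, map_sub, map_sub, map_one, hconjζ, hconjζinv,
      Complex.conj_natCast]
    ring
  -- existence
  have hex : P * (C c * (X * (X + 1) * d)) = C c * (X * (X + 1) * (X ^ n - 1)) := by
    rw [hd]; ring
  -- main per-solution facts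
  have main : ∀ g : ℂ[X], P * g = C c * (X * (X + 1) * (X ^ n - 1)) →
      (∀ k, (g.coeff k).im = 0) ∧ g.natDegree = n - 1 ∧
        ((X : ℂ[X]) ∣ g ∧ ¬ (X : ℂ[X]) ^ 2 ∣ g) ∧ g.eval 1 = 2 := by
    intro g heq
    have hg0 : g ≠ 0 := by
      intro h
      rw [h, mul_zero] at heq
      have hq : ((X : ℂ[X]) * (X + 1) * (X ^ n - 1)) ≠ 0 := by
        apply mul_ne_zero (mul_ne_zero X_ne_zero _)
        · have := monic_X_pow_sub_C (1 : ℂ) (show n ≠ 0 by omega)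
          simpa using this.ne_zero
        · intro h
          have := congrArg (eval 1) h
          simp at this
      exact hq (by
        have := heq.symm
        rcases mul_eq_zero.mp this with h | h
        · exact absurd h (C_ne_zero.mpr hc)
        · exact h)
    constructor
    · -- real coefficients
      have heq' := heq
      rw [hPdef] at heq'
      have hmap := congrArg (Polynomial.map (starRingEnd ℂ)) heq'
      simp only [Polynomial.map_mul, Polynomial.map_sub, Polynomial.map_add,
        Polynomial.map_one, Polynomial.map_pow, map_X, map_C, hconjζ, hconjζinv,
        hconjc] at hmap
      have hmap2 : P * (g.map (starRingEnd ℂ)) = C c * (X * (X + 1) * (X ^ n - 1)) := by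
        rw [hPdef]; linear_combination hmap
      have : g.map (starRingEnd ℂ) = g :=
        mul_left_cancel₀ hP0 (hmap2.trans heq.symm)
      intro k
      have hk := congrArg (fun p => Polynomial.coeff p k) this
      simp only [coeff_map] at hk
      exact (Complex.conj_eq_iff_im.mp hk)
    refine ⟨?_, ⟨?_, ?_⟩, ?_⟩
    · -- degree
      have hq : ((X : ℂ[X]) * (X + 1) * (X ^ n - 1)).Monic := by
        have h1 : ((X : ℂ[X]) + 1).Monic := by
          have := monic_X_add_C (1 : ℂ); simpa using this
        have h2 : ((X : ℂ[X]) ^ n - 1).Monic := by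
          have := monic_X_pow_sub_C (1 : ℂ) (show n ≠ 0 by omega); simpa using this
        exact (monic_X.mul h1).mul h2
      have hdq : ((X : ℂ[X]) * (X + 1) * (X ^ n - 1)).natDegree = n + 2 := by
        rw [(monic_X.mul (by have := monic_X_add_C (1 : ℂ); simpa using this)).natDegree_mul
          (by have := monic_X_pow_sub_C (1 : ℂ) (show n ≠ 0 by omega); simpa using this)]
        rw [monic_X.natDegree_mul (by have := monic_X_add_C (1 : ℂ); simpa using this)]
        have h3 : ((X : ℂ[X]) ^ n - 1).natDegree = n := by
          have := natDegree_X_pow_sub_C (n := n) (r := (1 : ℂ)); simpa using this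
        have h4 : ((X : ℂ[X]) + 1).natDegree = 1 := by
          have := natDegree_X_add_C (1 : ℂ); simpa using this
        rw [h3, h4, natDegree_X]; ring
      have hdP : P.natDegree = 3 := by
        rw [hPdef]
        have h1 : ((X : ℂ[X]) - 1).Monic := by
          have := monic_X_sub_C (1 : ℂ); simpa using this
        rw [(h1.mul (monic_X_sub_C ζ)).natDegree_mul (monic_X_sub_C ζ⁻¹),
          h1.natDegree_mul (monic_X_sub_C ζ)]
        have h2 : ((X : ℂ[X]) - 1).natDegree = 1 := by
          have := natDegree_X_sub_C (1 : ℂ); simpa using this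
        rw [h2, natDegree_X_sub_C, natDegree_X_sub_C]
      have := congrArg natDegree heq
      rw [natDegree_mul hP0 hg0, natDegree_C_mul hc, hdq, hdP] at this
      omega
    · -- X ∣ g
      rw [X_dvd_iff, coeff_zero_eq_eval_zero]
      have heq' := heq
      rw [hPdef] at heq'
      have hev := congrArg (eval 0) heq'
      simp only [eval_mul, eval_sub, eval_add, eval_one, eval_X, eval_C, eval_pow,
        zero_pow (show n ≠ 0 by omega)] at hev
      have hfac : ((0 : ℂ) - 1) * ((0 : ℂ) - ζ) * ((0 : ℂ) - ζ⁻¹) ≠ 0 :=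
        mul_ne_zero (mul_ne_zero (by norm_num) (by simpa using hζ0))
          (by simpa using inv_ne_zero hζ0)
      apply mul_left_cancel₀ hfac
      rw [mul_zero]
      linear_combination hev
    · -- ¬ X^2 ∣ g
      rintro ⟨h, hh⟩
      rw [hh, hPdef] at heq
      have h2 : (X : ℂ[X]) * (X * ((X - 1) * (X - C ζ) * (X - C ζ⁻¹) * h)) =
          X * (C c * ((X + 1) * (X ^ n - 1))) := by
        linear_combination heq
      have h3 := mul_left_cancel₀ (X_ne_zero (R := ℂ)) h2
      have hev := congrArg (eval 0) h3
      simp only [eval_mul, eval_sub, eval_add, eval_one, eval_X, eval_C, eval_pow,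
        zero_pow (show n ≠ 0 by omega), zero_mul] at hev
      apply hc
      linear_combination hev
    · -- g.eval 1 = 2
      have hgeom : (∑ k ∈ Finset.range n, (X : ℂ[X]) ^ k) * (X - 1) = X ^ n - 1 :=
        geom_sum_mul X n
      have h4 : ((X : ℂ[X]) - 1) * ((X - C ζ) * (X - C ζ⁻¹) * g) =
          (X - 1) * (C c * (X * (X + 1) * (∑ k ∈ Finset.range n, (X : ℂ[X]) ^ k))) := by
        rw [hPdef] at heq
        linear_combination heq - C c * (X * (X + 1)) * hgeom
      have hX1 : ((X : ℂ[X]) - 1) ≠ 0 := by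
        have := X_sub_C_ne_zero (1 : ℂ); simpa using this
      have h5 := mul_left_cancel₀ hX1 h4
      have hev := congrArg (eval 1) h5
      simp only [eval_mul, eval_sub, eval_add, eval_one, eval_X, eval_C, eval_pow,
        eval_finset_sum, one_pow, Finset.sum_const, Finset.card_range, nsmul_eq_mul,
        mul_one] at hev
      have hkey : (1 - ζ) * (1 - ζ⁻¹) * g.eval 1 = (1 - ζ) * (1 - ζ⁻¹) * 2 := by
        have hc' : c * (n : ℂ) = (1 - ζ) * (1 - ζ⁻¹) := by
          rw [hcdef]; field_simp
        linear_combination hev + 2 * hc'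
      exact mul_left_cancel₀ (mul_ne_zero hc1 hc2) hkey
  refine ⟨⟨C c * (X * (X + 1) * d), hex, fun y hy => mul_left_cancel₀ hP0 (hy.trans hex.symm)⟩,
    main⟩
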